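/- Lemma (strong-agreeable): Let α ∈ (0,1) and β ∈ (0,1/2], let J be a finite set of jobs feasible on m machines, and let j ∈ J be a job with ℓ_j ≥ 1. Then the number of jobs j' ∈ J \ {j} such that j' is α-tight, ℓ_{j'} ≤ ℓ_j, and j and j' are β-agreeable, is at most 8m/(αβ). -/

import Mathlib

/-- A job given by integer release date `r`, deadline `d`, and processing time `p`. -/
structure Job where
  r : ℤ
  d : ℤ
  p : ℤ
deriving DecidableEq

/-- A job is valid if `1 ≤ p` and `r + p ≤ d`. -/
def Job.valid (j : Job) : Prop := 1 ≤ j.p ∧ j.r + j.p ≤ j.d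

/-- The interval `I(j) = {t ∈ ℤ : r ≤ t < d}` of a job. -/
noncomputable def Job.interval (j : Job) : Finset ℤ := Finset.Ico j.r j.d

/-- The laxity `ℓ_j = d - r - p` of a job. -/
def Job.lax (j : Job) : ℤ := j.d - j.r - j.p

/-- The contribution `C(j, I) = max {0, |I ∩ I(j)| - ℓ_j}` of a job to a finite set `I ⊆ ℤ`. -/
noncomputable def contribution (j : Job) (I : Finset ℤ) : ℤ :=
  max 0 (((I ∩ j.interval).card : ℤ) - j.lax)

/-- A finite set of jobs `J` is feasible on `m` machines. -/
def Feasible (J : Finset Job) (m : ℕ) : Prop :=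
  ∃ σ : ℤ → Finset Job,
    (∀ t, σ t ⊆ J) ∧
    (∀ t, (σ t).card ≤ m) ∧
    (∀ t, ∀ j ∈ σ t, j.r ≤ t ∧ t < j.d) ∧
    (∀ j ∈ J, ((Finset.Ico j.r j.d).filter (fun t => j ∈ σ t)).card = j.p.toNat)

/-- A job is `α`-tight if `p_j > α (d_j - r_j)`. -/
def AlphaTight (α : ℝ) (j : Job) : Prop := α * ((j.d : ℝ) - (j.r : ℝ)) < (j.p : ℝ)

/-- The `β`-interval `I_β(j) = [r_j + βℓ_j, d_j - βℓ_j)` of a job (a real interval). -/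
def betaInterval (β : ℝ) (j : Job) : Set ℝ :=
  Set.Ico ((j.r : ℝ) + β * (j.lax : ℝ)) ((j.d : ℝ) - β * (j.lax : ℝ))

/-- Two jobs are agreeable if `(r_j - r_{j'})·(d_j - d_{j'}) ≥ 0`. -/
def Agreeable (j j' : Job) : Prop :=
  0 ≤ ((j.r : ℝ) - (j'.r : ℝ)) * ((j.d : ℝ) - (j'.d : ℝ))

/-- Two jobs are `β`-agreeable if they are agreeable and their `β`-intervals intersect. -/
def BetaAgreeable (β : ℝ) (j j' : Job) : Prop :=
  Agreeable j j' ∧ (betaInterval β j ∩ betaInterval β j').Nonempty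

/-- Capacity lemma: the total contribution of jobs in a feasible set to any finite set of
time slots is at most `m` times the number of slots. -/
lemma sum_contribution_le (J : Finset Job) (hJ : ∀ j ∈ J, j.valid) (m : ℕ)
    (hfeas : Feasible J m) (I : Finset ℤ) :
    ∑ j ∈ J, contribution j I ≤ (m : ℤ) * I.card := by
  classical
  obtain ⟨σ, hsub, hm, _htime, hproc⟩ := hfeas
  have key : ∀ j ∈ J, contribution j I ≤ ((I.filter fun t => j ∈ σ t).card : ℤ) := by
    intro j hj
    have hv := hJ j hj
    have hp1 : (1:ℤ) ≤ j.p := hv.1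
    have hrd : j.r + j.p ≤ j.d := hv.2
    have htot : ((Finset.Ico j.r j.d).filter fun t => j ∈ σ t).card = j.p.toNat := hproc j hj
    have hKsplit := Finset.card_filter_add_card_filter_not
      (s := I ∩ j.interval) (fun t => j ∈ σ t)
    have hIsplit := Finset.card_filter_add_card_filter_not
      (s := j.interval) (fun t => j ∈ σ t)
    have h1 : ((I ∩ j.interval).filter fun t => j ∈ σ t) ⊆ I.filter fun t => j ∈ σ t :=
      Finset.filter_subset_filter _ Finset.inter_subset_left
    have h2 : ((I ∩ j.interval).filter fun t => ¬ j ∈ σ t) ⊆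
        j.interval.filter fun t => ¬ j ∈ σ t :=
      Finset.filter_subset_filter _ Finset.inter_subset_right
    have hc1 := Finset.card_le_card h1
    have hc2 := Finset.card_le_card h2
    have hIc : (j.interval.card : ℤ) = j.d - j.r := by
      rw [Job.interval, Int.card_Ico, Int.toNat_of_nonneg (by omega)]
    have hfi : ((j.interval.filter fun t => j ∈ σ t).card : ℤ) = j.p := by
      have : (j.interval.filter fun t => j ∈ σ t).card = j.p.toNat := htot
      rw [this, Int.toNat_of_nonneg (by omega)]
    unfold contribution Job.lax
    apply max_le (Int.natCast_nonneg _)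
    omega
  calc ∑ j ∈ J, contribution j I
      ≤ ∑ j ∈ J, ((I.filter fun t => j ∈ σ t).card : ℤ) := Finset.sum_le_sum key
    _ = ((∑ j ∈ J, (I.filter fun t => j ∈ σ t).card : ℕ) : ℤ) := by push_cast; ring
    _ ≤ (m : ℤ) * I.card := by
        have hnat : ∑ j ∈ J, (I.filter fun t => j ∈ σ t).card ≤ m * I.card := by
          calc ∑ j ∈ J, (I.filter fun t => j ∈ σ t).card
              = ∑ j ∈ J, ∑ t ∈ I, if j ∈ σ t then 1 else 0 := by
                refine Finset.sum_congr rfl fun j _ => Finset.card_filter _ _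
            _ = ∑ t ∈ I, ∑ j ∈ J, if j ∈ σ t then 1 else 0 := Finset.sum_comm
            _ = ∑ t ∈ I, (J.filter fun j => j ∈ σ t).card := by
                refine Finset.sum_congr rfl fun t _ => (Finset.card_filter _ _).symm
            _ ≤ ∑ _t ∈ I, m := by
                refine Finset.sum_le_sum fun t _ => ?_
                have he : J.filter (fun j => j ∈ σ t) = σ t := by
                  ext x
                  simp only [Finset.mem_filter]
                  exact ⟨fun h => h.2, fun h => ⟨hsub t h, h⟩⟩
                rw [he]; exact hm t
            _ = I.card * m := by rw [Finset.sum_const, smul_eq_mul]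
            _ = m * I.card := Nat.mul_comm _ _
        exact_mod_cast hnat

/-- Lower bound on the contribution of a job to an integer interval. -/
lemma contrib_ge (j' : Job) (a b : ℤ) (c : ℝ)
    (h : c ≤ min (b:ℝ) (j'.d:ℝ) - max (a:ℝ) (j'.r:ℝ) - (j'.lax:ℝ)) :
    c ≤ (contribution j' (Finset.Ico a b) : ℝ) := by
  have hcard : (b ⊓ j'.d) - (a ⊔ j'.r) ≤ ((Finset.Ico a b ∩ j'.interval).card : ℤ) := by
    rw [Job.interval, Finset.Ico_inter_Ico, Int.card_Ico]
    exact Int.self_le_toNat _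
  have h2 : ((b ⊓ j'.d) - (a ⊔ j'.r) - j'.lax : ℤ) ≤ contribution j' (Finset.Ico a b) := by
    unfold contribution
    refine le_trans (by omega) (le_max_right _ _)
  have h3 : ((b ⊓ j'.d - (a ⊔ j'.r) - j'.lax : ℤ) : ℝ)
      ≤ (contribution j' (Finset.Ico a b) : ℝ) := by exact_mod_cast h2
  push_cast at h3
  linarith

/-- A job whose `β`-interval starts before the end of the `β`-interval of `j`, with
smaller laxity, larger deadline, and `α`-tight, contributes at least `αβℓ_j` to the
window `[d_j - 2ℓ_j, d_j + 2ℓ_j)`. -/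
lemma contrib_right (α β : ℝ) (hα0 : 0 < α) (hα1 : α < 1) (hβ0 : 0 < β) (hβ2 : β ≤ 1/2)
    (j j' : Job) (hv' : j'.valid) (hℓ1 : 1 ≤ j.lax) (hℓ' : j'.lax ≤ j.lax)
    (ht : AlphaTight α j') (hd : j.d ≤ j'.d)
    (hint : (j'.r : ℝ) + β * (j'.lax:ℝ) < (j.d : ℝ) - β * (j.lax:ℝ)) :
    α * β * (j.lax : ℝ) ≤ (contribution j' (Finset.Ico (j.d - 2*j.lax) (j.d + 2*j.lax)) : ℝ) := by
  apply contrib_ge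
  have hL1 : (1:ℝ) ≤ (j.lax:ℝ) := by exact_mod_cast hℓ1
  have hL0 : (0:ℝ) ≤ (j.lax:ℝ) := by linarith
  have hL'R : (j'.lax:ℝ) ≤ (j.lax:ℝ) := by exact_mod_cast hℓ'
  have hl'0 : (0:ℤ) ≤ j'.lax := by
    have h1 := hv'.1; have h2 := hv'.2; unfold Job.lax; omega
  have hL'0 : (0:ℝ) ≤ (j'.lax:ℝ) := by exact_mod_cast hl'0
  have hdR : (j.d:ℝ) ≤ (j'.d:ℝ) := by exact_mod_cast hd
  have hp' : (j'.lax:ℝ) = (j'.d:ℝ) - (j'.r:ℝ) - (j'.p:ℝ) := by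
    unfold Job.lax; push_cast; ring
  have htR : α * ((j'.d:ℝ) - (j'.r:ℝ)) < (j'.p:ℝ) := ht
  have hbl : (0:ℝ) ≤ β * (j.lax:ℝ) := mul_nonneg hβ0.le hL0
  have hbl' : (0:ℝ) ≤ β * (j'.lax:ℝ) := mul_nonneg hβ0.le hL'0
  have hab : α * β ≤ 1 := by nlinarith
  have hABL : α * β * (j.lax:ℝ) ≤ (j.lax:ℝ) := by nlinarith
  push_cast
  rcases le_total ((j'.d:ℝ)) ((j.d:ℝ) + 2*(j.lax:ℝ)) with h1 | h1 <;>
    rcases le_total ((j.d:ℝ) - 2*(j.lax:ℝ)) ((j'.r:ℝ)) with h2 | h2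
  · rw [min_eq_right h1, max_eq_right h2]
    nlinarith [mul_lt_mul_of_pos_left hint hα0, mul_nonneg hα0.le (sub_nonneg.mpr hdR)]
  · rw [min_eq_right h1, max_eq_left h2]
    linarith
  · rw [min_eq_left h1, max_eq_right h2]
    linarith
  · rw [min_eq_left h1, max_eq_left h2]
    linarith

/-- Mirror version of `contrib_right`, for the window `[r_j - 2ℓ_j, r_j + 2ℓ_j)`. -/
lemma contrib_left (α β : ℝ) (hα0 : 0 < α) (hα1 : α < 1) (hβ0 : 0 < β) (hβ2 : β ≤ 1/2)
    (j j' : Job) (hv' : j'.valid) (hℓ1 : 1 ≤ j.lax) (hℓ' : j'.lax ≤ j.lax)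
    (ht : AlphaTight α j') (hr : j'.r ≤ j.r)
    (hint : (j.r : ℝ) + β * (j.lax:ℝ) < (j'.d : ℝ) - β * (j'.lax:ℝ)) :
    α * β * (j.lax : ℝ) ≤ (contribution j' (Finset.Ico (j.r - 2*j.lax) (j.r + 2*j.lax)) : ℝ) := by
  apply contrib_ge
  have hL1 : (1:ℝ) ≤ (j.lax:ℝ) := by exact_mod_cast hℓ1
  have hL0 : (0:ℝ) ≤ (j.lax:ℝ) := by linarith
  have hL'R : (j'.lax:ℝ) ≤ (j.lax:ℝ) := by exact_mod_cast hℓ'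
  have hl'0 : (0:ℤ) ≤ j'.lax := by
    have h1 := hv'.1; have h2 := hv'.2; unfold Job.lax; omega
  have hL'0 : (0:ℝ) ≤ (j'.lax:ℝ) := by exact_mod_cast hl'0
  have hrR : (j'.r:ℝ) ≤ (j.r:ℝ) := by exact_mod_cast hr
  have hp' : (j'.lax:ℝ) = (j'.d:ℝ) - (j'.r:ℝ) - (j'.p:ℝ) := by
    unfold Job.lax; push_cast; ring
  have htR : α * ((j'.d:ℝ) - (j'.r:ℝ)) < (j'.p:ℝ) := ht
  have hbl : (0:ℝ) ≤ β * (j.lax:ℝ) := mul_nonneg hβ0.le hL0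
  have hbl' : (0:ℝ) ≤ β * (j'.lax:ℝ) := mul_nonneg hβ0.le hL'0
  have hab : α * β ≤ 1 := by nlinarith
  have hABL : α * β * (j.lax:ℝ) ≤ (j.lax:ℝ) := by nlinarith
  push_cast
  rcases le_total ((j'.d:ℝ)) ((j.r:ℝ) + 2*(j.lax:ℝ)) with h1 | h1 <;>
    rcases le_total ((j.r:ℝ) - 2*(j.lax:ℝ)) ((j'.r:ℝ)) with h2 | h2
  · rw [min_eq_right h1, max_eq_right h2]
    nlinarith [mul_lt_mul_of_pos_left hint hα0, mul_nonneg hα0.le (sub_nonneg.mpr hrR)]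
  · rw [min_eq_right h1, max_eq_left h2]
    linarith
  · rw [min_eq_left h1, max_eq_right h2]
    linarith
  · rw [min_eq_left h1, max_eq_left h2]
    linarith

/-- Counting via capacity: if every member of `F₁ ⊆ J` contributes at least `c` to the
window `[a, b)`, then `|F₁| · c ≤ m · (b - a)⁺`. -/
lemma count_bound (J : Finset Job) (hJ : ∀ j ∈ J, j.valid) (m : ℕ)
    (hfeas : Feasible J m) (F1 : Finset Job) (hF1 : F1 ⊆ J)
    (c : ℝ) (a b : ℤ)
    (hkey : ∀ j' ∈ F1, c ≤ (contribution j' (Finset.Ico a b) : ℝ)) :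
    (F1.card : ℝ) * c ≤ (m:ℝ) * (((b - a).toNat : ℕ) : ℝ) := by
  have h1 : (F1.card : ℝ) * c ≤ ∑ j' ∈ F1, (contribution j' (Finset.Ico a b) : ℝ) := by
    have := Finset.card_nsmul_le_sum F1 (fun j' => (contribution j' (Finset.Ico a b) : ℝ)) c hkey
    simpa [nsmul_eq_mul] using this
  have h2 : ∑ j' ∈ F1, (contribution j' (Finset.Ico a b) : ℝ)
      ≤ ∑ j' ∈ J, (contribution j' (Finset.Ico a b) : ℝ) := by
    refine Finset.sum_le_sum_of_subset_of_nonneg hF1 fun i _ _ => ?_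
    have : (0:ℤ) ≤ contribution i (Finset.Ico a b) := le_max_left _ _
    exact_mod_cast this
  have h3 := sum_contribution_le J hJ m hfeas (Finset.Ico a b)
  have h3R : ∑ j' ∈ J, (contribution j' (Finset.Ico a b) : ℝ)
      ≤ (m:ℝ) * ((Finset.Ico a b).card : ℝ) := by exact_mod_cast h3
  have hc : ((Finset.Ico a b).card : ℕ) = (b - a).toNat := Int.card_Ico a b
  rw [hc] at h3R
  linarith

/-- strong-agreeable: at most `8m/(αβ)` α-tight jobs `j' ≠ j` of laxity
at most `ℓ_j` can be `β`-agreeable with `j`. -/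
theorem strong_agreeable_bound
    (α β : ℝ) (hα : α ∈ Set.Ioo (0 : ℝ) 1) (hβ : β ∈ Set.Ioc (0 : ℝ) (1 / 2))
    (J : Finset Job) (hJ : ∀ j ∈ J, j.valid) (m : ℕ) (hfeas : Feasible J m)
    (j : Job) (hj : j ∈ J) (hlax : 1 ≤ j.lax) :
    ({j' : Job | j' ∈ J ∧ j' ≠ j ∧ AlphaTight α j' ∧ j'.lax ≤ j.lax ∧
        BetaAgreeable β j j'}.ncard : ℝ) ≤ 8 * (m : ℝ) / (α * β) := by
  classical
  obtain ⟨hα0, hα1⟩ := hα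
  obtain ⟨hβ0, hβ2⟩ := hβ
  have hL1R : (1:ℝ) ≤ (j.lax:ℝ) := by exact_mod_cast hlax
  have hLpos : (0:ℝ) < (j.lax:ℝ) := by linarith
  have habpos : 0 < α * β := mul_pos hα0 hβ0
  set F : Finset Job := J.filter
    (fun j' => j' ≠ j ∧ AlphaTight α j' ∧ j'.lax ≤ j.lax ∧ BetaAgreeable β j j') with hF
  have hncard : ({j' : Job | j' ∈ J ∧ j' ≠ j ∧ AlphaTight α j' ∧ j'.lax ≤ j.lax ∧
      BetaAgreeable β j j'}).ncard = F.card := by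
    rw [← Set.ncard_coe_finset]
    congr 1
    ext x
    simp [hF, Finset.mem_filter, Finset.mem_coe]
  rw [hncard]
  set F1 := F.filter (fun j' => j.r ≤ j'.r ∧ j.d ≤ j'.d) with hF1
  set F2 := F.filter (fun j' => j'.r ≤ j.r ∧ j'.d ≤ j.d) with hF2
  have hsplit : F ⊆ F1 ∪ F2 := by
    intro x hx
    have hx' := hx
    rw [hF, Finset.mem_filter] at hx'
    obtain ⟨hxJ, _, _, _, hag, _⟩ := hx'
    rw [Finset.mem_union]
    rcases mul_nonneg_iff.mp hag with ⟨h1, h2⟩ | ⟨h1, h2⟩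
    · right
      rw [hF2, Finset.mem_filter]
      exact ⟨hx, by exact_mod_cast sub_nonneg.mp h1, by exact_mod_cast sub_nonneg.mp h2⟩
    · left
      rw [hF1, Finset.mem_filter]
      exact ⟨hx, by exact_mod_cast sub_nonpos.mp h1, by exact_mod_cast sub_nonpos.mp h2⟩
  have hcard : F.card ≤ F1.card + F2.card :=
    le_trans (Finset.card_le_card hsplit) (Finset.card_union_le _ _)
  have hwin : ((((j.d + 2*j.lax) - (j.d - 2*j.lax)).toNat : ℕ) : ℝ) = 4 * (j.lax:ℝ) := by
    have he : (j.d + 2*j.lax) - (j.d - 2*j.lax) = 4 * j.lax := by ring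
    rw [he]
    have h4 : ((4 * j.lax).toNat : ℤ) = 4 * j.lax := Int.toNat_of_nonneg (by
      have : (0:ℤ) ≤ j.lax := by omega
      omega)
    have := congrArg (fun z : ℤ => (z : ℝ)) h4
    push_cast at this ⊢
    linarith [this]
  have hwin2 : ((((j.r + 2*j.lax) - (j.r - 2*j.lax)).toNat : ℕ) : ℝ) = 4 * (j.lax:ℝ) := by
    have he : (j.r + 2*j.lax) - (j.r - 2*j.lax) = 4 * j.lax := by ring
    rw [he]
    have h4 : ((4 * j.lax).toNat : ℤ) = 4 * j.lax := Int.toNat_of_nonneg (by omega)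
    have := congrArg (fun z : ℤ => (z : ℝ)) h4
    push_cast at this ⊢
    linarith [this]
  have hF1J : F1 ⊆ J := (Finset.filter_subset _ _).trans (Finset.filter_subset _ _)
  have hF2J : F2 ⊆ J := (Finset.filter_subset _ _).trans (Finset.filter_subset _ _)
  -- bound on F1
  have hb1 : (F1.card : ℝ) ≤ 4 * m / (α * β) := by
    have hkey : ∀ j' ∈ F1, α * β * (j.lax:ℝ) ≤
        (contribution j' (Finset.Ico (j.d - 2*j.lax) (j.d + 2*j.lax)) : ℝ) := by
      intro j' hj'
      rw [hF1, Finset.mem_filter, hF, Finset.mem_filter] at hj'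
      obtain ⟨⟨hj'J, _, htight, hlx, _, hne⟩, _, hdd⟩ := hj'
      obtain ⟨x, hx1, hx2⟩ := hne
      simp only [betaInterval, Set.mem_Ico] at hx1 hx2
      exact contrib_right α β hα0 hα1 hβ0 hβ2 j j' (hJ j' hj'J) hlax hlx htight hdd
        (lt_of_le_of_lt hx2.1 hx1.2)
    have := count_bound J hJ m hfeas F1 hF1J (α * β * (j.lax:ℝ)) _ _ hkey
    rw [hwin] at this
    rw [le_div_iff₀ habpos]
    have hfin : (F1.card : ℝ) * (α * β) * (j.lax:ℝ) ≤ (4 * m) * (j.lax:ℝ) := by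
      nlinarith [this]
    exact le_of_mul_le_mul_right hfin hLpos
  have hb2 : (F2.card : ℝ) ≤ 4 * m / (α * β) := by
    have hkey : ∀ j' ∈ F2, α * β * (j.lax:ℝ) ≤
        (contribution j' (Finset.Ico (j.r - 2*j.lax) (j.r + 2*j.lax)) : ℝ) := by
      intro j' hj'
      rw [hF2, Finset.mem_filter, hF, Finset.mem_filter] at hj'
      obtain ⟨⟨hj'J, _, htight, hlx, _, hne⟩, hrr, _⟩ := hj'
      obtain ⟨x, hx1, hx2⟩ := hne
      simp only [betaInterval, Set.mem_Ico] at hx1 hx2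
      exact contrib_left α β hα0 hα1 hβ0 hβ2 j j' (hJ j' hj'J) hlax hlx htight hrr
        (lt_of_le_of_lt hx1.1 hx2.2)
    have := count_bound J hJ m hfeas F2 hF2J (α * β * (j.lax:ℝ)) _ _ hkey
    rw [hwin2] at this
    rw [le_div_iff₀ habpos]
    have hfin : (F2.card : ℝ) * (α * β) * (j.lax:ℝ) ≤ (4 * m) * (j.lax:ℝ) := by
      nlinarith [this]
    exact le_of_mul_le_mul_right hfin hLpos
  calc (F.card : ℝ) ≤ (F1.card : ℝ) + (F2.card : ℝ) := by exact_mod_cast hcard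
    _ ≤ 4 * m / (α * β) + 4 * m / (α * β) := add_le_add hb1 hb2
    _ = 8 * (m:ℝ) / (α * β) := by ring
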